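/- Let G be a graph without isolated vertices, let v be a vertex of G, and let G' be the graph obtained from G by adding a new vertex u and joining u to every vertex of N_G(v). Then γ_t(G') = γ_t(G) and γ_gr^t(G') = γ_gr^t(G). -/

import Mathlib

/-- `S` is a total dominating set of `G`: every vertex has a neighbor in `S`. -/
def IsTotalDomSet {V : Type*} (G : SimpleGraph V) (S : Set V) : Prop :=
  ∀ v : V, ∃ u ∈ S, G.Adj v u

/-- `l` is a legal sequence of `G`: the vertices are distinct and every vertex
(except possibly the first) totally dominates a vertex not totally dominated
by the previous vertices. -/
def IsLegalSeq {V : Type*} (G : SimpleGraph V) (l : List V) : Prop :=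
  l.Nodup ∧ ∀ i : Fin l.length, 0 < (i : ℕ) →
    ∃ w : V, G.Adj (l.get i) w ∧ ∀ j : Fin l.length, (j : ℕ) < (i : ℕ) → ¬ G.Adj (l.get j) w

/-- `l` is a total dominating sequence of `G`. -/
def IsTotalDomSeq {V : Type*} (G : SimpleGraph V) (l : List V) : Prop :=
  IsLegalSeq G l ∧ IsTotalDomSet G {v | v ∈ l}

/-- The Grundy total domination number of `G`: the maximum length of a total
dominating sequence. -/
noncomputable def grundyTotalDomNum {V : Type*} (G : SimpleGraph V) : ℕ :=
  sSup {k : ℕ | ∃ l : List V, IsTotalDomSeq G l ∧ l.length = k}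

/-- The total domination number of `G`: the minimum cardinality of a total
dominating set. -/
noncomputable def totalDomNum {V : Type*} (G : SimpleGraph V) : ℕ :=
  sInf {k : ℕ | ∃ S : Set V, IsTotalDomSet G S ∧ S.ncard = k}

/-- `A`, `B` is a bipartition of `G`. -/
def IsBipartitionOf {V : Type*} (G : SimpleGraph V) (A B : Set V) : Prop :=
  (∀ v : V, (v ∈ A ∧ v ∉ B) ∨ (v ∈ B ∧ v ∉ A)) ∧
  ∀ ⦃u v : V⦄, G.Adj u v → (u ∈ A ∧ v ∈ B) ∨ (u ∈ B ∧ v ∈ A)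

/-- `G` has no false twins: distinct vertices have distinct open neighborhoods. -/
def FalseTwinFree {V : Type*} (G : SimpleGraph V) : Prop :=
  ∀ u v : V, u ≠ v → G.neighborSet u ≠ G.neighborSet v

/-- `G` has no isolated vertices. -/
def NoIsolatedVerts {V : Type*} (G : SimpleGraph V) : Prop :=
  ∀ v : V, ∃ u : V, G.Adj v u

/-- The graph obtained from `G` by adding a new vertex (`none`) joined to every
vertex of `N_G(v)`. -/
def addFalseTwin {V : Type*} (G : SimpleGraph V) (v : V) : SimpleGraph (Option V) :=
  SimpleGraph.fromRel (fun x y =>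
    match x, y with
    | some a, some b => G.Adj a b
    | none, some a => G.Adj v a
    | _, _ => False)



section Aux

variable {V : Type*} (G : SimpleGraph V) (v : V)

lemma addFalseTwin_adj (x y : Option V) :
    (addFalseTwin G v).Adj x y ↔ G.Adj (x.getD v) (y.getD v) := by
  cases x <;> cases y <;>
    simp only [addFalseTwin, SimpleGraph.fromRel_adj, Option.getD_some, Option.getD_none]
  · simp [SimpleGraph.irrefl]
  · simp
  · simp [G.adj_comm]
  · constructor
    · rintro ⟨-, h | h⟩
      · exact h
      · exact h.symm
    · intro h
      refine ⟨?_, Or.inl h⟩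
      intro e
      obtain rfl := Option.some_injective V e
      exact G.irrefl h

variable {G v}

/-- mapping a tds of `G` into `addFalseTwin G v`. -/
lemma tds_map_some {l : List V} (h : IsTotalDomSeq G l) :
    IsTotalDomSeq (addFalseTwin G v) (l.map some) := by
  obtain ⟨⟨hnd, hleg⟩, hdom⟩ := h
  refine ⟨⟨hnd.map (Option.some_injective V), ?_⟩, ?_⟩
  · intro i hi
    have hlen : (l.map some).length = l.length := List.length_map _
    set i' : Fin l.length := Fin.cast hlen i with hi'
    obtain ⟨w, hw1, hw2⟩ := hleg i' hi
    refine ⟨some w, ?_, ?_⟩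
    · rw [List.get_eq_getElem, List.getElem_map, addFalseTwin_adj]
      simpa [hi'] using hw1
    · intro j hj
      rw [List.get_eq_getElem, List.getElem_map, addFalseTwin_adj]
      set j' : Fin l.length := Fin.cast hlen j with hj'
      simpa [hj'] using hw2 j' hj
  · intro x
    obtain ⟨u, hu, hadj⟩ := hdom (x.getD v)
    refine ⟨some u, by simpa using List.mem_map_of_mem (f := some) hu, ?_⟩
    rw [addFalseTwin_adj]
    simpa using hadj

lemma tds_unmap {l' : List (Option V)} (h : IsTotalDomSeq (addFalseTwin G v) l') :
    IsTotalDomSeq G (l'.map (fun x => x.getD v)) := by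
  obtain ⟨⟨hnd, hleg⟩, hdom⟩ := h
  have hlen : (l'.map (fun x : Option V => x.getD v)).length = l'.length := List.length_map _
  -- no two indices have equal images
  have key : ∀ i j : Fin l'.length, (i : ℕ) < (j : ℕ) →
      (l'.get i).getD v = (l'.get j).getD v → False := by
    intro i j hij heq
    obtain ⟨w, hw1, hw2⟩ := hleg j (lt_of_le_of_lt (Nat.zero_le _) hij)
    exact hw2 i hij ((addFalseTwin_adj G v _ _).mpr
        (heq ▸ (addFalseTwin_adj G v _ _).mp hw1))
  refine ⟨⟨?_, ?_⟩, ?_⟩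
  · refine hnd.map_on ?_
    intro x hx y hy hf
    by_contra hne
    obtain ⟨i, hi⟩ := List.get_of_mem hx
    obtain ⟨j, hj⟩ := List.get_of_mem hy
    rcases lt_trichotomy (i : ℕ) (j : ℕ) with h | h | h
    · exact key i j h (by rw [hi, hj]; exact hf)
    · exact hne (hi ▸ hj ▸ congrArg l'.get (Fin.ext h))
    · exact key j i h (by rw [hi, hj]; exact hf.symm)
  · intro i hi
    set i' : Fin l'.length := Fin.cast hlen i with hi'
    obtain ⟨w', hw1, hw2⟩ := hleg i' hi
    refine ⟨w'.getD v, ?_, ?_⟩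
    · rw [List.get_eq_getElem, List.getElem_map]
      exact (addFalseTwin_adj G v _ _).mp hw1
    · intro j hj hadj
      set j' : Fin l'.length := Fin.cast hlen j with hj'
      refine hw2 j' hj ((addFalseTwin_adj G v _ _).mpr ?_)
      rw [List.get_eq_getElem, List.getElem_map] at hadj
      exact hadj
  · intro x
    obtain ⟨u', hu', hadj⟩ := hdom (some x)
    refine ⟨u'.getD v, by simpa using List.mem_map_of_mem (f := fun x : Option V => x.getD v) hu', ?_⟩
    have := (addFalseTwin_adj G v _ _).mp hadj
    simpa using this

lemma tdset_map_some {S : Set V} (h : IsTotalDomSet G S) :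
    IsTotalDomSet (addFalseTwin G v) (some '' S) := by
  intro x
  obtain ⟨u, hu, hadj⟩ := h (x.getD v)
  exact ⟨some u, Set.mem_image_of_mem _ hu, (addFalseTwin_adj G v _ _).mpr (by simpa using hadj)⟩

lemma tdset_unmap {S' : Set (Option V)} (h : IsTotalDomSet (addFalseTwin G v) S') :
    IsTotalDomSet G ((fun x : Option V => x.getD v) '' S') := by
  intro x
  obtain ⟨u', hu', hadj⟩ := h (some x)
  exact ⟨u'.getD v, Set.mem_image_of_mem _ hu',
    by simpa using (addFalseTwin_adj G v _ _).mp hadj⟩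

end Aux


/-- Adding a false twin of a vertex `v` (a new vertex joined to
all of `N_G(v)`) changes neither the total domination number nor the Grundy
total domination number. -/
theorem total_dom_and_grundy_addFalseTwin {V : Type*} [Fintype V] (G : SimpleGraph V)
    (hiso : NoIsolatedVerts G) (v : V) :
    totalDomNum (addFalseTwin G v) = totalDomNum G ∧
    grundyTotalDomNum (addFalseTwin G v) = grundyTotalDomNum G := by

  constructor
  · -- total domination number
    have hAne : {k : ℕ | ∃ S : Set V, IsTotalDomSet G S ∧ S.ncard = k}.Nonempty := by
      refine ⟨(Set.univ : Set V).ncard, Set.univ, ?_, rfl⟩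
      intro x
      obtain ⟨u, hu⟩ := hiso x
      exact ⟨u, Set.mem_univ u, hu⟩
    have hA'ne : {k : ℕ | ∃ S : Set (Option V),
        IsTotalDomSet (addFalseTwin G v) S ∧ S.ncard = k}.Nonempty := by
      obtain ⟨k, S, hS, hk⟩ := hAne
      exact ⟨(some '' S).ncard, some '' S, tdset_map_some hS, rfl⟩
    apply le_antisymm
    · obtain ⟨S, hS, hk⟩ := Nat.sInf_mem hAne
      calc totalDomNum (addFalseTwin G v) ≤ (some '' S).ncard :=
            Nat.sInf_le ⟨some '' S, tdset_map_some hS, rfl⟩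
        _ = S.ncard := Set.ncard_image_of_injective S (Option.some_injective V)
        _ = _ := hk
    · obtain ⟨S', hS', hk⟩ := Nat.sInf_mem hA'ne
      calc totalDomNum G ≤ ((fun x : Option V => x.getD v) '' S').ncard :=
            Nat.sInf_le ⟨_, tdset_unmap hS', rfl⟩
        _ ≤ S'.ncard := Set.ncard_image_le (Set.toFinite S')
        _ = _ := hk
  · -- grundy
    unfold grundyTotalDomNum
    congr 1
    ext k
    constructor
    · rintro ⟨l', hl', rfl⟩
      exact ⟨l'.map (fun x => x.getD v), tds_unmap hl', List.length_map _⟩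
    · rintro ⟨l, hl, rfl⟩
      exact ⟨l.map some, tds_map_some hl, List.length_map _⟩
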